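/- Let x₁ ≤ x₂ ≤ ⋯ ≤ x₆ be real numbers. For every partition of the index set {1, …, 6} into two 3-element subsets S and T, the sum of the squared distances within the two triples (x₁, x₂, x₃) and (x₄, x₅, x₆) is minimal: S(x₁,x₂,x₃) + S(x₄,x₅,x₆) ≤ S(x_S) + S(x_T), where S(x_S) denotes the squared distance within the triple indexed by S. -/

import Mathlib

/-- The squared distance within the tuple of values indexed by a finite index
set `S`: the sum of `(x j - x i)²` over all pairs `i < j` in `S`. -/
def sqDistWithin {m : ℕ} (x : Fin m → ℝ) (S : Finset (Fin m)) : ℝ :=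
  ∑ i ∈ S, ∑ j ∈ S.filter (fun j => i < j), (x j - x i) ^ 2

/-- For a sorted 6-tuple, the partition into the triples `(x₁,x₂,x₃)` and
`(x₄,x₅,x₆)` minimizes the total squared distance within, over all partitions
of the six indices into two 3-element subsets. -/
lemma sqDistWithin_triple {m : ℕ} (x : Fin m → ℝ) (a b c : Fin m)
    (hab : a < b) (hbc : b < c) :
    sqDistWithin x {a,b,c} = (x b - x a)^2 + (x c - x b)^2 + (x c - x a)^2 := by
  have hac := hab.trans hbc
  simp [sqDistWithin, Finset.sum_filter, Finset.sum_insert, Finset.mem_insert,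
    hab.ne, hbc.ne, hac.ne, hab, hbc, hac, hab.asymm, hbc.asymm, hac.asymm, lt_irrefl]
  ring

set_option maxHeartbeats 1000000 in
theorem sorted_six_tuple_triple_matching_min_sq (x : Fin 6 → ℝ)
    (hx : Monotone x) (S T : Finset (Fin 6)) (hS : S.card = 3)
    (hT : T.card = 3) (hdisj : Disjoint S T) (hunion : S ∪ T = Finset.univ) :
    ((x 1 - x 0) ^ 2 + (x 2 - x 1) ^ 2 + (x 2 - x 0) ^ 2) +
      ((x 4 - x 3) ^ 2 + (x 5 - x 4) ^ 2 + (x 5 - x 3) ^ 2) ≤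
    sqDistWithin x S + sqDistWithin x T := by
  have h01 : x 0 ≤ x 1 := hx (by decide)
  have h12 : x 1 ≤ x 2 := hx (by decide)
  have h23 : x 2 ≤ x 3 := hx (by decide)
  have h34 : x 3 ≤ x 4 := hx (by decide)
  have h45 : x 4 ≤ x 5 := hx (by decide)
  have hT' : T = Sᶜ := by
    ext a
    simp only [Finset.mem_compl]
    constructor
    · intro ha hs
      exact Finset.disjoint_left.mp hdisj hs ha
    · intro ha
      rcases Finset.mem_union.mp (hunion ▸ Finset.mem_univ a) with h | h
      · exact absurd h ha
      · exact h
  subst hT'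
  have henum : S = {0,1,2} ∨ S = {0,1,3} ∨ S = {0,1,4} ∨ S = {0,1,5} ∨ S = {0,2,3} ∨ S = {0,2,4} ∨ S = {0,2,5} ∨ S = {0,3,4} ∨ S = {0,3,5} ∨ S = {0,4,5} ∨ S = {1,2,3} ∨ S = {1,2,4} ∨ S = {1,2,5} ∨ S = {1,3,4} ∨ S = {1,3,5} ∨ S = {1,4,5} ∨ S = {2,3,4} ∨ S = {2,3,5} ∨ S = {2,4,5} ∨ S = {3,4,5} :=
    (by decide : ∀ S : Finset (Fin 6), S.card = 3 → S = {0,1,2} ∨ S = {0,1,3} ∨ S = {0,1,4} ∨ S = {0,1,5} ∨ S = {0,2,3} ∨ S = {0,2,4} ∨ S = {0,2,5} ∨ S = {0,3,4} ∨ S = {0,3,5} ∨ S = {0,4,5} ∨ S = {1,2,3} ∨ S = {1,2,4} ∨ S = {1,2,5} ∨ S = {1,3,4} ∨ S = {1,3,5} ∨ S = {1,4,5} ∨ S = {2,3,4} ∨ S = {2,3,5} ∨ S = {2,4,5} ∨ S = {3,4,5}) S hS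
  rcases henum with rfl|rfl|rfl|rfl|rfl|rfl|rfl|rfl|rfl|rfl|rfl|rfl|rfl|rfl|rfl|rfl|rfl|rfl|rfl|rfl
  · rw [show ({0,1,2} : Finset (Fin 6))ᶜ = {3,4,5} by decide,
      sqDistWithin_triple x 0 1 2 (by decide) (by decide),
      sqDistWithin_triple x 3 4 5 (by decide) (by decide)]
  · rw [show ({0,1,3} : Finset (Fin 6))ᶜ = {2,4,5} by decide,
      sqDistWithin_triple x 0 1 3 (by decide) (by decide),
      sqDistWithin_triple x 2 4 5 (by decide) (by decide)]
    nlinarith [h01, h12, h23, h34, h45, sq_nonneg (x 1 - x 0), sq_nonneg (x 2 - x 1), sq_nonneg (x 3 - x 2), sq_nonneg (x 4 - x 3), sq_nonneg (x 5 - x 4), mul_nonneg (sub_nonneg.2 h23) (sub_nonneg.2 h12), mul_nonneg (sub_nonneg.2 h34) (sub_nonneg.2 h23), mul_nonneg (sub_nonneg.2 h45) (sub_nonneg.2 h34)]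
  · rw [show ({0,1,4} : Finset (Fin 6))ᶜ = {2,3,5} by decide,
      sqDistWithin_triple x 0 1 4 (by decide) (by decide),
      sqDistWithin_triple x 2 3 5 (by decide) (by decide)]
    nlinarith [h01, h12, h23, h34, h45, sq_nonneg (x 1 - x 0), sq_nonneg (x 2 - x 1), sq_nonneg (x 3 - x 2), sq_nonneg (x 4 - x 3), sq_nonneg (x 5 - x 4), mul_nonneg (sub_nonneg.2 h23) (sub_nonneg.2 h12), mul_nonneg (sub_nonneg.2 h34) (sub_nonneg.2 h23), mul_nonneg (sub_nonneg.2 h45) (sub_nonneg.2 h34)]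
  · rw [show ({0,1,5} : Finset (Fin 6))ᶜ = {2,3,4} by decide,
      sqDistWithin_triple x 0 1 5 (by decide) (by decide),
      sqDistWithin_triple x 2 3 4 (by decide) (by decide)]
    nlinarith [h01, h12, h23, h34, h45, sq_nonneg (x 1 - x 0), sq_nonneg (x 2 - x 1), sq_nonneg (x 3 - x 2), sq_nonneg (x 4 - x 3), sq_nonneg (x 5 - x 4), mul_nonneg (sub_nonneg.2 h23) (sub_nonneg.2 h12), mul_nonneg (sub_nonneg.2 h34) (sub_nonneg.2 h23), mul_nonneg (sub_nonneg.2 h45) (sub_nonneg.2 h34)]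
  · rw [show ({0,2,3} : Finset (Fin 6))ᶜ = {1,4,5} by decide,
      sqDistWithin_triple x 0 2 3 (by decide) (by decide),
      sqDistWithin_triple x 1 4 5 (by decide) (by decide)]
    nlinarith [h01, h12, h23, h34, h45, sq_nonneg (x 1 - x 0), sq_nonneg (x 2 - x 1), sq_nonneg (x 3 - x 2), sq_nonneg (x 4 - x 3), sq_nonneg (x 5 - x 4), mul_nonneg (sub_nonneg.2 h23) (sub_nonneg.2 h12), mul_nonneg (sub_nonneg.2 h34) (sub_nonneg.2 h23), mul_nonneg (sub_nonneg.2 h45) (sub_nonneg.2 h34)]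
  · rw [show ({0,2,4} : Finset (Fin 6))ᶜ = {1,3,5} by decide,
      sqDistWithin_triple x 0 2 4 (by decide) (by decide),
      sqDistWithin_triple x 1 3 5 (by decide) (by decide)]
    nlinarith [h01, h12, h23, h34, h45, sq_nonneg (x 1 - x 0), sq_nonneg (x 2 - x 1), sq_nonneg (x 3 - x 2), sq_nonneg (x 4 - x 3), sq_nonneg (x 5 - x 4), mul_nonneg (sub_nonneg.2 h23) (sub_nonneg.2 h12), mul_nonneg (sub_nonneg.2 h34) (sub_nonneg.2 h23), mul_nonneg (sub_nonneg.2 h45) (sub_nonneg.2 h34)]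
  · rw [show ({0,2,5} : Finset (Fin 6))ᶜ = {1,3,4} by decide,
      sqDistWithin_triple x 0 2 5 (by decide) (by decide),
      sqDistWithin_triple x 1 3 4 (by decide) (by decide)]
    nlinarith [h01, h12, h23, h34, h45, sq_nonneg (x 1 - x 0), sq_nonneg (x 2 - x 1), sq_nonneg (x 3 - x 2), sq_nonneg (x 4 - x 3), sq_nonneg (x 5 - x 4), mul_nonneg (sub_nonneg.2 h23) (sub_nonneg.2 h12), mul_nonneg (sub_nonneg.2 h34) (sub_nonneg.2 h23), mul_nonneg (sub_nonneg.2 h45) (sub_nonneg.2 h34)]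
  · rw [show ({0,3,4} : Finset (Fin 6))ᶜ = {1,2,5} by decide,
      sqDistWithin_triple x 0 3 4 (by decide) (by decide),
      sqDistWithin_triple x 1 2 5 (by decide) (by decide)]
    nlinarith [h01, h12, h23, h34, h45, sq_nonneg (x 1 - x 0), sq_nonneg (x 2 - x 1), sq_nonneg (x 3 - x 2), sq_nonneg (x 4 - x 3), sq_nonneg (x 5 - x 4), mul_nonneg (sub_nonneg.2 h23) (sub_nonneg.2 h12), mul_nonneg (sub_nonneg.2 h34) (sub_nonneg.2 h23), mul_nonneg (sub_nonneg.2 h45) (sub_nonneg.2 h34)]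
  · rw [show ({0,3,5} : Finset (Fin 6))ᶜ = {1,2,4} by decide,
      sqDistWithin_triple x 0 3 5 (by decide) (by decide),
      sqDistWithin_triple x 1 2 4 (by decide) (by decide)]
    nlinarith [h01, h12, h23, h34, h45, sq_nonneg (x 1 - x 0), sq_nonneg (x 2 - x 1), sq_nonneg (x 3 - x 2), sq_nonneg (x 4 - x 3), sq_nonneg (x 5 - x 4), mul_nonneg (sub_nonneg.2 h23) (sub_nonneg.2 h12), mul_nonneg (sub_nonneg.2 h34) (sub_nonneg.2 h23), mul_nonneg (sub_nonneg.2 h45) (sub_nonneg.2 h34)]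
  · rw [show ({0,4,5} : Finset (Fin 6))ᶜ = {1,2,3} by decide,
      sqDistWithin_triple x 0 4 5 (by decide) (by decide),
      sqDistWithin_triple x 1 2 3 (by decide) (by decide)]
    nlinarith [h01, h12, h23, h34, h45, sq_nonneg (x 1 - x 0), sq_nonneg (x 2 - x 1), sq_nonneg (x 3 - x 2), sq_nonneg (x 4 - x 3), sq_nonneg (x 5 - x 4), mul_nonneg (sub_nonneg.2 h23) (sub_nonneg.2 h12), mul_nonneg (sub_nonneg.2 h34) (sub_nonneg.2 h23), mul_nonneg (sub_nonneg.2 h45) (sub_nonneg.2 h34)]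
  · rw [show ({1,2,3} : Finset (Fin 6))ᶜ = {0,4,5} by decide,
      sqDistWithin_triple x 1 2 3 (by decide) (by decide),
      sqDistWithin_triple x 0 4 5 (by decide) (by decide)]
    nlinarith [h01, h12, h23, h34, h45, sq_nonneg (x 1 - x 0), sq_nonneg (x 2 - x 1), sq_nonneg (x 3 - x 2), sq_nonneg (x 4 - x 3), sq_nonneg (x 5 - x 4), mul_nonneg (sub_nonneg.2 h23) (sub_nonneg.2 h12), mul_nonneg (sub_nonneg.2 h34) (sub_nonneg.2 h23), mul_nonneg (sub_nonneg.2 h45) (sub_nonneg.2 h34)]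
  · rw [show ({1,2,4} : Finset (Fin 6))ᶜ = {0,3,5} by decide,
      sqDistWithin_triple x 1 2 4 (by decide) (by decide),
      sqDistWithin_triple x 0 3 5 (by decide) (by decide)]
    nlinarith [h01, h12, h23, h34, h45, sq_nonneg (x 1 - x 0), sq_nonneg (x 2 - x 1), sq_nonneg (x 3 - x 2), sq_nonneg (x 4 - x 3), sq_nonneg (x 5 - x 4), mul_nonneg (sub_nonneg.2 h23) (sub_nonneg.2 h12), mul_nonneg (sub_nonneg.2 h34) (sub_nonneg.2 h23), mul_nonneg (sub_nonneg.2 h45) (sub_nonneg.2 h34)]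
  · rw [show ({1,2,5} : Finset (Fin 6))ᶜ = {0,3,4} by decide,
      sqDistWithin_triple x 1 2 5 (by decide) (by decide),
      sqDistWithin_triple x 0 3 4 (by decide) (by decide)]
    nlinarith [h01, h12, h23, h34, h45, sq_nonneg (x 1 - x 0), sq_nonneg (x 2 - x 1), sq_nonneg (x 3 - x 2), sq_nonneg (x 4 - x 3), sq_nonneg (x 5 - x 4), mul_nonneg (sub_nonneg.2 h23) (sub_nonneg.2 h12), mul_nonneg (sub_nonneg.2 h34) (sub_nonneg.2 h23), mul_nonneg (sub_nonneg.2 h45) (sub_nonneg.2 h34)]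
  · rw [show ({1,3,4} : Finset (Fin 6))ᶜ = {0,2,5} by decide,
      sqDistWithin_triple x 1 3 4 (by decide) (by decide),
      sqDistWithin_triple x 0 2 5 (by decide) (by decide)]
    nlinarith [h01, h12, h23, h34, h45, sq_nonneg (x 1 - x 0), sq_nonneg (x 2 - x 1), sq_nonneg (x 3 - x 2), sq_nonneg (x 4 - x 3), sq_nonneg (x 5 - x 4), mul_nonneg (sub_nonneg.2 h23) (sub_nonneg.2 h12), mul_nonneg (sub_nonneg.2 h34) (sub_nonneg.2 h23), mul_nonneg (sub_nonneg.2 h45) (sub_nonneg.2 h34)]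
  · rw [show ({1,3,5} : Finset (Fin 6))ᶜ = {0,2,4} by decide,
      sqDistWithin_triple x 1 3 5 (by decide) (by decide),
      sqDistWithin_triple x 0 2 4 (by decide) (by decide)]
    nlinarith [h01, h12, h23, h34, h45, sq_nonneg (x 1 - x 0), sq_nonneg (x 2 - x 1), sq_nonneg (x 3 - x 2), sq_nonneg (x 4 - x 3), sq_nonneg (x 5 - x 4), mul_nonneg (sub_nonneg.2 h23) (sub_nonneg.2 h12), mul_nonneg (sub_nonneg.2 h34) (sub_nonneg.2 h23), mul_nonneg (sub_nonneg.2 h45) (sub_nonneg.2 h34)]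
  · rw [show ({1,4,5} : Finset (Fin 6))ᶜ = {0,2,3} by decide,
      sqDistWithin_triple x 1 4 5 (by decide) (by decide),
      sqDistWithin_triple x 0 2 3 (by decide) (by decide)]
    nlinarith [h01, h12, h23, h34, h45, sq_nonneg (x 1 - x 0), sq_nonneg (x 2 - x 1), sq_nonneg (x 3 - x 2), sq_nonneg (x 4 - x 3), sq_nonneg (x 5 - x 4), mul_nonneg (sub_nonneg.2 h23) (sub_nonneg.2 h12), mul_nonneg (sub_nonneg.2 h34) (sub_nonneg.2 h23), mul_nonneg (sub_nonneg.2 h45) (sub_nonneg.2 h34)]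
  · rw [show ({2,3,4} : Finset (Fin 6))ᶜ = {0,1,5} by decide,
      sqDistWithin_triple x 2 3 4 (by decide) (by decide),
      sqDistWithin_triple x 0 1 5 (by decide) (by decide)]
    nlinarith [h01, h12, h23, h34, h45, sq_nonneg (x 1 - x 0), sq_nonneg (x 2 - x 1), sq_nonneg (x 3 - x 2), sq_nonneg (x 4 - x 3), sq_nonneg (x 5 - x 4), mul_nonneg (sub_nonneg.2 h23) (sub_nonneg.2 h12), mul_nonneg (sub_nonneg.2 h34) (sub_nonneg.2 h23), mul_nonneg (sub_nonneg.2 h45) (sub_nonneg.2 h34)]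
  · rw [show ({2,3,5} : Finset (Fin 6))ᶜ = {0,1,4} by decide,
      sqDistWithin_triple x 2 3 5 (by decide) (by decide),
      sqDistWithin_triple x 0 1 4 (by decide) (by decide)]
    nlinarith [h01, h12, h23, h34, h45, sq_nonneg (x 1 - x 0), sq_nonneg (x 2 - x 1), sq_nonneg (x 3 - x 2), sq_nonneg (x 4 - x 3), sq_nonneg (x 5 - x 4), mul_nonneg (sub_nonneg.2 h23) (sub_nonneg.2 h12), mul_nonneg (sub_nonneg.2 h34) (sub_nonneg.2 h23), mul_nonneg (sub_nonneg.2 h45) (sub_nonneg.2 h34)]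
  · rw [show ({2,4,5} : Finset (Fin 6))ᶜ = {0,1,3} by decide,
      sqDistWithin_triple x 2 4 5 (by decide) (by decide),
      sqDistWithin_triple x 0 1 3 (by decide) (by decide)]
    nlinarith [h01, h12, h23, h34, h45, sq_nonneg (x 1 - x 0), sq_nonneg (x 2 - x 1), sq_nonneg (x 3 - x 2), sq_nonneg (x 4 - x 3), sq_nonneg (x 5 - x 4), mul_nonneg (sub_nonneg.2 h23) (sub_nonneg.2 h12), mul_nonneg (sub_nonneg.2 h34) (sub_nonneg.2 h23), mul_nonneg (sub_nonneg.2 h45) (sub_nonneg.2 h34)]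
  · rw [show ({3,4,5} : Finset (Fin 6))ᶜ = {0,1,2} by decide,
      sqDistWithin_triple x 3 4 5 (by decide) (by decide),
      sqDistWithin_triple x 0 1 2 (by decide) (by decide)]
    nlinarith [h01, h12, h23, h34, h45, sq_nonneg (x 1 - x 0), sq_nonneg (x 2 - x 1), sq_nonneg (x 3 - x 2), sq_nonneg (x 4 - x 3), sq_nonneg (x 5 - x 4), mul_nonneg (sub_nonneg.2 h23) (sub_nonneg.2 h12), mul_nonneg (sub_nonneg.2 h34) (sub_nonneg.2 h23), mul_nonneg (sub_nonneg.2 h45) (sub_nonneg.2 h34)]
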